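/- Let A be a finite set, let e, f : A → [0,∞) and M : A × A → [0,∞), and let A₂ ⊆ A with A₁ = A \ A₂. Define f̃ : A₁ → [0,∞) by f̃(a) = f(a) + ∑_{b∈A₂} M(b,a), and let ẽ and M̃ be the restrictions of e and M to A₁ and A₁ × A₁ respectively. Then S(A, e, f, M) \ A₂ ⊆ S(A₁, ẽ, f̃, M̃). -/

import Mathlib

open scoped Classical

/-- The map `T(B) = {a ∈ A : f(a) + ∑_{b ∈ B} M(b,a) > e(a)}` on subsets of a finite set `A`. -/
noncomputable def Tmap {A : Type*} [Fintype A] (e f : A → ℝ) (M : A → A → ℝ)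
    (B : Finset A) : Finset A :=
  Finset.univ.filter (fun a => e a < f a + ∑ b ∈ B, M b a)

/-- `S` is the smallest fixed point of `T`. -/
def IsSmallestFP {A : Type*} (T : Finset A → Finset A) (S : Finset A) : Prop :=
  T S = S ∧ ∀ S' : Finset A, T S' = S' → S ⊆ S'

theorem smallest_fixed_point_restrict {A : Type*} [Fintype A] [DecidableEq A]
    (e f : A → ℝ) (M : A → A → ℝ)
    (he : ∀ a, 0 ≤ e a) (hf : ∀ a, 0 ≤ f a) (hM : ∀ b a, 0 ≤ M b a)
    (A₂ : Finset A)
    -- `S` is the smallest fixed point for the data `(A, e, f, M)`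
    (S : Finset A)
    (hS : IsSmallestFP (Tmap e f M) S)
    -- `S₁` is the smallest fixed point on `A₁ = A \ A₂` for the data `(ẽ, f̃, M̃)`
    (S₁ : Finset {a : A // a ∉ A₂})
    (hS₁ : IsSmallestFP
      (Tmap (fun a => e a.1)
            (fun a => f a.1 + ∑ b ∈ A₂, M b a.1)
            (fun b a => M b.1 a.1)) S₁) :
    S \ A₂ ⊆ S₁.image Subtype.val := by
  -- Step 1: a fixed point below any prefixed point of the (monotone) map `Tmap e f M`.
  have hmono : ∀ B B' : Finset A, B ⊆ B' → Tmap e f M B ⊆ Tmap e f M B' := by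
    intro B B' hBB' a ha
    simp only [Tmap, Finset.mem_filter, Finset.mem_univ, true_and] at ha ⊢
    refine lt_of_lt_of_le ha ?_
    exact add_le_add le_rfl (Finset.sum_le_sum_of_subset_of_nonneg hBB' (fun b _ _ => hM b a))
  have key : ∀ W : Finset A, Tmap e f M W ⊆ W →
      ∃ W' : Finset A, Tmap e f M W' = W' ∧ W' ⊆ W := by
    intro W
    induction W using Finset.strongInduction with
    | _ W ih =>
      intro hW
      by_cases hEq : Tmap e f M W = W
      · exact ⟨W, hEq, Finset.Subset.refl W⟩
      · obtain ⟨W', h1, h2⟩ := ih (Tmap e f M W) (ssubset_of_subset_of_ne hW hEq)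
          (hmono _ _ hW)
        exact ⟨W', h1, h2.trans hW⟩
  -- Step 2: `W = S₁.image Subtype.val ∪ A₂` is a prefixed point.
  set W : Finset A := S₁.image Subtype.val ∪ A₂ with hWdef
  have hdisj : Disjoint (S₁.image Subtype.val) A₂ := by
    rw [Finset.disjoint_left]
    rintro a ha ha2
    obtain ⟨b, _, rfl⟩ := Finset.mem_image.mp ha
    exact b.2 ha2
  have hsum : ∀ a, ∑ b ∈ W, M b a
      = (∑ b ∈ S₁, M b.1 a) + ∑ b ∈ A₂, M b a := by
    intro a
    rw [hWdef, Finset.sum_union hdisj, Finset.sum_image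
      (fun x _ y _ h => Subtype.val_injective h)]
  have hpre : Tmap e f M W ⊆ W := by
    intro a ha
    simp only [Tmap, Finset.mem_filter, Finset.mem_univ, true_and] at ha
    by_cases ha2 : a ∈ A₂
    · exact Finset.mem_union_right _ ha2
    · refine Finset.mem_union_left _ ?_
      have : (⟨a, ha2⟩ : {a : A // a ∉ A₂}) ∈ S₁ := by
        rw [← hS₁.1]
        simp only [Tmap, Finset.mem_filter, Finset.mem_univ, true_and]
        rw [hsum a] at ha
        linarith
      exact Finset.mem_image.mpr ⟨⟨a, ha2⟩, this, rfl⟩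
  obtain ⟨W', hW'fix, hW'sub⟩ := key W hpre
  have hSW : S ⊆ W' := hS.2 W' hW'fix
  intro a ha
  obtain ⟨haS, ha2⟩ := Finset.mem_sdiff.mp ha
  have : a ∈ W := hW'sub (hSW haS)
  rcases Finset.mem_union.mp this with h | h
  · exact h
  · exact absurd h ha2
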